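/- Let X = l^p_a(α), α ≥ 1, 1 ≤ p ≤ ∞. Then there is a constant c > 0 such that for all r ∈ [0,1), C_{n,r}(X, H^∞) ≥ c (1/(1−r))^{α − 1/p}. -/

import Mathlib

open Complex Metric ComplexConjugate

noncomputable section

/-- Predicate: `f` is holomorphic on the unit disc. -/
def HolOn (f : ℂ → ℂ) : Prop := AnalyticOn ℂ f (Metric.ball 0 1)

/-- `k`-th Taylor coefficient of `f` at the origin. -/
def coef (f : ℂ → ℂ) (k : ℕ) : ℂ := iteratedDeriv k f 0 / (Nat.factorial k)

/-- Hardy space `H²` norm via Taylor coefficients. -/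
def H2norm (f : ℂ → ℂ) : ℝ := Real.sqrt (∑' k : ℕ, ‖coef f k‖ ^ 2)

def MemH2 (f : ℂ → ℂ) : Prop := HolOn f ∧ Summable (fun k : ℕ => ‖coef f k‖ ^ 2)

def Hinfnorm (f : ℂ → ℂ) : ℝ := sSup ((fun z => ‖f z‖) '' Metric.ball (0:ℂ) 1)

def MemHinf (f : ℂ → ℂ) : Prop := HolOn f ∧ BddAbove ((fun z => ‖f z‖) '' Metric.ball (0:ℂ) 1)

/-- Elementary Blaschke factor. -/
def blaschke (l z : ℂ) : ℂ := (l - z) / (1 - conj l * z)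

def BlaschkeProd {n : ℕ} (l : Fin n → ℂ) (z : ℂ) : ℂ := ∏ i, blaschke (l i) z

/-- `g` agrees with `f` on the finite sequence `l` (with multiplicities). -/
def AgreeOn {n : ℕ} (l : Fin n → ℂ) (f g : ℂ → ℂ) : Prop :=
  ∃ h : ℂ → ℂ, HolOn h ∧ ∀ z ∈ Metric.ball (0:ℂ) 1, f z - g z = BlaschkeProd l z * h z

/-- Interpolation constant `c(σ, H², H^∞)`. -/
def cH2Hinf {n : ℕ} (l : Fin n → ℂ) : ℝ :=
  sSup { c | ∃ f, MemH2 f ∧ H2norm f ≤ 1 ∧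
    c = sInf { m | ∃ g, MemHinf g ∧ Hinfnorm g = m ∧ AgreeOn l f g } }

/-- `C_{n,r}(H², H^∞)`. -/
def CnrH2Hinf (n : ℕ) (r : ℝ) : ℝ :=
  sSup { c | ∃ m, m ≤ n ∧ ∃ l : Fin m → ℂ, (∀ i, ‖l i‖ ≤ r) ∧ c = cH2Hinf l }

/-- Cauchy sesquilinear pairing. -/
def cauchyPairing (f g : ℂ → ℂ) : ℂ := ∑' k : ℕ, coef f k * conj (coef g k)

/-- Membership in the model space `K_B = H² ⊖ B H²`. -/
def MemKB {n : ℕ} (l : Fin n → ℂ) (g : ℂ → ℂ) : Prop :=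
  MemH2 g ∧ ∀ h, MemH2 h → cauchyPairing g (fun z => BlaschkeProd l z * h z) = 0

/-- Weighted space `l^p_a(α)` norm: `‖f‖^p = Σ |f̂(k)|^p/(k+1)^{p(α-1)}`. -/
def lpaNorm (p α : ℝ) (f : ℂ → ℂ) : ℝ :=
  (∑' k : ℕ, ‖coef f k‖ ^ p / ((k : ℝ) + 1) ^ (p * (α - 1))) ^ (1 / p)

def MemLpa (p α : ℝ) (f : ℂ → ℂ) : Prop :=
  HolOn f ∧ Summable (fun k : ℕ => ‖coef f k‖ ^ p / ((k : ℝ) + 1) ^ (p * (α - 1)))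

/-- Weighted space `l^∞_a(α)` norm (case `p = ∞`). -/
def linfaNorm (α : ℝ) (f : ℂ → ℂ) : ℝ :=
  ⨆ k : ℕ, ‖coef f k‖ / ((k : ℝ) + 1) ^ (α - 1)

def MemLinfa (α : ℝ) (f : ℂ → ℂ) : Prop :=
  HolOn f ∧ BddAbove (Set.range fun k : ℕ => ‖coef f k‖ / ((k : ℝ) + 1) ^ (α - 1))

/-- `C_{n,r}(l^p_a(α), H^∞)`. -/
def CnrLpaHinf (p α : ℝ) (n : ℕ) (r : ℝ) : ℝ :=
  sSup { c | ∃ m, m ≤ n ∧ ∃ l : Fin m → ℂ, (∀ i, ‖l i‖ ≤ r) ∧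
    c = sSup { c' | ∃ f, MemLpa p α f ∧ lpaNorm p α f ≤ 1 ∧
      c' = sInf { y | ∃ g, MemHinf g ∧ Hinfnorm g = y ∧ AgreeOn l f g } } }

/-- `C_{n,r}(l^∞_a(α), H^∞)`. -/
def CnrLinfaHinf (α : ℝ) (n : ℕ) (r : ℝ) : ℝ :=
  sSup { c | ∃ m, m ≤ n ∧ ∃ l : Fin m → ℂ, (∀ i, ‖l i‖ ≤ r) ∧
    c = sSup { c' | ∃ f, MemLinfa α f ∧ linfaNorm α f ≤ 1 ∧
      c' = sInf { y | ∃ g, MemHinf g ∧ Hinfnorm g = y ∧ AgreeOn l f g } } }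

theorem HolOn.nhd {f : ℂ → ℂ} (hf : HolOn f) : AnalyticOnNhd ℂ f (ball (0:ℂ) 1) :=
  (isOpen_ball.analyticOn_iff_analyticOnNhd).1 hf

-- PS lemma
theorem hasSum_coef {f : ℂ → ℂ} (hf : HolOn f) {z : ℂ} (hz : z ∈ ball (0:ℂ) 1) :
    HasSum (fun k => coef f k * z ^ k) (f z) := by
  rw [mem_ball, dist_zero_right] at hz
  set s : ℝ := (‖z‖ + 1) / 2 with hs
  have hs0 : 0 < s := by positivity
  have hzs : ‖z‖ < s := by rw [hs]; linarith
  have hs1 : s < 1 := by rw [hs]; linarith [norm_nonneg z]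
  set R : NNReal := ⟨s, hs0.le⟩ with hR
  have hd : DifferentiableOn ℂ f (closedBall (0:ℂ) (R:ℝ)) := by
    apply (hf.nhd.differentiableOn).mono
    intro w hw
    simp only [mem_closedBall, dist_zero_right] at hw
    simp only [mem_ball, dist_zero_right]
    exact lt_of_le_of_lt hw hs1
  have H := hd.hasFPowerSeriesOnBall (by exact_mod_cast hs0)
  have hz' : z ∈ Metric.eball (0:ℂ) (R:ENNReal) := by
    simp only [Metric.mem_eball, edist_zero_right, ← coe_nnnorm]
    exact_mod_cast hzs
  have hsum := H.hasSum hz'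
  rw [zero_add] at hsum
  have hcoef : ∀ n, (cauchyPowerSeries f 0 R).coeff n = coef f n := by
    intro n
    have h1 := H.factorial_smul (1:ℂ) n
    rw [FormalMultilinearSeries.apply_eq_pow_smul_coeff, one_pow, one_smul] at h1
    rw [show ((iteratedFDeriv ℂ n f 0) fun _ => (1:ℂ)) = iteratedDeriv n f 0 from (iteratedDeriv_eq_iteratedFDeriv ..).symm] at h1
    rw [coef, ← h1, nsmul_eq_mul]
    have : ((n.factorial :ℂ)) ≠ 0 := by exact_mod_cast n.factorial_ne_zero
    field_simp
  have hfun : (fun k => coef f k * z ^ k) = fun n => (cauchyPowerSeries f 0 R n) fun _ => z := by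
    funext n
    rw [FormalMultilinearSeries.apply_eq_pow_smul_coeff, hcoef, smul_eq_mul, mul_comm]
  rw [hfun]; exact hsum

theorem dslope_analytic {F : ℂ → ℂ} {a : ℂ} (hF : AnalyticOnNhd ℂ F (ball (0:ℂ) 1))
    (ha : a ∈ ball (0:ℂ) 1) : AnalyticOnNhd ℂ (dslope F a) (ball (0:ℂ) 1) := by
  intro z hz
  rcases eq_or_ne z a with rfl | hne
  · obtain ⟨p, hp⟩ := hF z hz
    exact ⟨p.fslope, hp.has_fpower_series_dslope_fslope⟩
  · have h1 : AnalyticAt ℂ (fun w => (w - a)⁻¹ * (F w - F a)) z := by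
      apply AnalyticAt.mul
      · exact (((analyticAt_id).sub analyticAt_const).inv (sub_ne_zero.2 hne))
      · exact (hF z hz).sub analyticAt_const
    apply h1.congr
    have ho : IsOpen {w : ℂ | w ≠ a} := isOpen_ne
    filter_upwards [ho.mem_nhds hne] with w hw
    rw [dslope_of_ne _ hw, slope_def_field]
    field_simp [sub_ne_zero.2 hw]

theorem dslope_bound {F : ℂ → ℂ} {a : ℂ} {r ρ M : ℝ} (hF : AnalyticOnNhd ℂ F (ball (0:ℂ) 1))
    (ha : ‖a‖ ≤ r) (hr0 : 0 ≤ r) (hrρ : r < ρ) (hρ1 : ρ < 1)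
    (hM : ∀ z ∈ closedBall (0:ℂ) ρ, ‖F z‖ ≤ M) :
    ∀ z ∈ closedBall (0:ℂ) ((ρ + r)/2), ‖dslope F a z‖ ≤ 4 * M / (ρ - r) := by
  set ρ₁ : ℝ := (ρ + r)/2 with hρ₁def
  have hρ₁pos : 0 < ρ₁ := by rw [hρ₁def]; linarith
  have hrρ₁ : r < ρ₁ := by rw [hρ₁def]; linarith
  have hρ₁ρ : ρ₁ < ρ := by rw [hρ₁def]; linarith
  have hM0 : 0 ≤ M := le_trans (norm_nonneg _) (hM 0 (by simp; linarith))
  have haball : a ∈ ball (0:ℂ) 1 := by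
    rw [mem_ball, dist_zero_right]; linarith
  have hG : AnalyticOnNhd ℂ (dslope F a) (ball (0:ℂ) 1) := dslope_analytic hF haball
  intro z hz
  have hsub : closedBall (0:ℂ) ρ₁ ⊆ ball (0:ℂ) 1 :=
    closedBall_subset_ball (by linarith)
  have hd : DiffContOnCl ℂ (dslope F a) (ball (0:ℂ) ρ₁) := by
    constructor
    · exact (hG.differentiableOn).mono fun w hw => hsub (ball_subset_closedBall hw)
    · apply ((hG.differentiableOn).continuousOn).mono
      rw [closure_ball _ hρ₁pos.ne']
      exact hsub
  apply Complex.norm_le_of_forall_mem_frontier_norm_le isBounded_ball hd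
  · intro w hw
    rw [frontier_ball _ hρ₁pos.ne', mem_sphere_iff_norm, sub_zero] at hw
    have hanorm : ‖a‖ < ρ₁ := lt_of_le_of_lt ha hrρ₁
    have hwa : w ≠ a := fun h => absurd hw (by rw [h]; exact ne_of_lt hanorm)
    rw [dslope_of_ne _ hwa, slope_def_field, div_eq_mul_inv, norm_mul, norm_inv]
    have hdist : ρ₁ - r ≤ ‖w - a‖ := by
      have := norm_sub_norm_le w a
      linarith [abs_norm (w - a), norm_sub_norm_le w a]
    have hFw : ‖F w‖ ≤ M := hM w (by rw [mem_closedBall, dist_zero_right, hw]; linarith)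
    have hFa : ‖F a‖ ≤ M := hM a (by rw [mem_closedBall, dist_zero_right]; linarith)
    have h1 : ‖F w - F a‖ ≤ 2 * M := le_trans (norm_sub_le _ _) (by linarith)
    have h2 : ‖w - a‖⁻¹ ≤ (ρ₁ - r)⁻¹ := by
      apply inv_anti₀ (by linarith) hdist
    calc ‖F w - F a‖ * ‖w - a‖⁻¹ ≤ (2*M) * (ρ₁ - r)⁻¹ := by
          apply mul_le_mul h1 h2 (by positivity) (by linarith)
      _ = 4 * M / (ρ - r) := by rw [hρ₁def]; field_simp; ring
  · rw [closure_ball _ hρ₁pos.ne']; exact hz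

def Kb (r : ℝ) : ℕ → ℝ → ℝ → ℝ
  | 0, _, _ => 0
  | m+1, M, ρ => M + 2 * Kb r m (4*M/(ρ-r)) ((ρ+r)/2)

theorem Kb_nonneg (r : ℝ) (m : ℕ) : ∀ M ρ : ℝ, 0 ≤ M → r < ρ → 0 ≤ Kb r m M ρ := by
  induction m with
  | zero => intro M ρ _ _; simp [Kb]
  | succ m ih =>
    intro M ρ hM hρ
    have h1 : 0 ≤ 4*M/(ρ-r) := by
      apply div_nonneg (by linarith) (by linarith)
    have h2 : r < (ρ+r)/2 := by linarith
    have := ih (4*M/(ρ-r)) ((ρ+r)/2) h1 h2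
    simp only [Kb]; linarith

theorem interp_exists {r : ℝ} (hr0 : 0 ≤ r) (m : ℕ) :
    ∀ (l : Fin m → ℂ) (F : ℂ → ℂ) (ρ M : ℝ),
    AnalyticOnNhd ℂ F (ball (0:ℂ) 1) → (∀ i, ‖l i‖ ≤ r) → r < ρ → ρ < 1 →
    (∀ z ∈ closedBall (0:ℂ) ρ, ‖F z‖ ≤ M) →
    ∃ g h : ℂ → ℂ, AnalyticOnNhd ℂ g (ball (0:ℂ) 1) ∧ AnalyticOnNhd ℂ h (ball (0:ℂ) 1) ∧
      (∀ z, F z - g z = (∏ i, (z - l i)) * h z) ∧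
      (∀ z ∈ closedBall (0:ℂ) 1, ‖g z‖ ≤ Kb r m M ρ) := by
  induction m with
  | zero =>
    intro l F ρ M hF _ _ _ _
    refine ⟨0, F, ?_, hF, ?_, ?_⟩
    · intro z hz; exact analyticAt_const
    · intro z; simp
    · intro z hz; simp [Kb]
  | succ m ih =>
    intro l F ρ M hF hl hrρ hρ1 hM
    set a := l 0 with ha
    have har : ‖a‖ ≤ r := hl 0
    have hab : a ∈ ball (0:ℂ) 1 := by rw [mem_ball, dist_zero_right]; linarith
    set F₁ := dslope F a with hF₁
    have hF₁a : AnalyticOnNhd ℂ F₁ (ball (0:ℂ) 1) := dslope_analytic hF hab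
    have hM₁ := dslope_bound hF har hr0 hrρ hρ1 hM
    obtain ⟨g₁, h₁, hg₁a, hh₁a, hfac, hbd⟩ :=
      ih (fun i => l i.succ) F₁ ((ρ+r)/2) (4*M/(ρ-r)) hF₁a (fun i => hl i.succ)
        (by linarith) (by linarith) hM₁
    refine ⟨fun z => F a + (z - a) * g₁ z, h₁, ?_, hh₁a, ?_, ?_⟩
    · intro z hz
      exact analyticAt_const.add (((analyticAt_id).sub analyticAt_const).mul (hg₁a z hz))
    · intro z
      have e1 : F z - F a = (z - a) * F₁ z := by
        rw [hF₁, ← smul_eq_mul, sub_smul_dslope]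
      have e2 := hfac z
      calc F z - (F a + (z - a) * g₁ z) = (F z - F a) - (z - a) * g₁ z := by ring
        _ = (z - a) * (F₁ z - g₁ z) := by rw [e1]; ring
        _ = (z - a) * ((∏ i : Fin m, (z - l i.succ)) * h₁ z) := by rw [e2]
        _ = (∏ i : Fin (m+1), (z - l i)) * h₁ z := by
            rw [Fin.prod_univ_succ]; ring
    · intro z hz
      rw [mem_closedBall, dist_zero_right] at hz
      have h1 : ‖F a‖ ≤ M := hM a (by rw [mem_closedBall, dist_zero_right]; linarith)
      have h2 : ‖z - a‖ ≤ 2 := le_trans (norm_sub_le _ _) (by linarith)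
      have h3 : ‖g₁ z‖ ≤ Kb r m (4*M/(ρ-r)) ((ρ+r)/2) := by
        apply hbd z; rw [mem_closedBall, dist_zero_right]; exact hz
      have h4 : 0 ≤ Kb r m (4*M/(ρ-r)) ((ρ+r)/2) := by
        apply Kb_nonneg
        · apply div_nonneg _ (by linarith)
          have : 0 ≤ M := le_trans (norm_nonneg _) (hM 0 (by simp; linarith))
          linarith
        · linarith
      calc ‖F a + (z - a) * g₁ z‖ ≤ ‖F a‖ + ‖z - a‖ * ‖g₁ z‖ := by
            refine le_trans (norm_add_le _ _) ?_
            rw [norm_mul]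
        _ ≤ M + 2 * Kb r m (4*M/(ρ-r)) ((ρ+r)/2) := by
            have := mul_le_mul h2 h3 (norm_nonneg _) (by norm_num)
            linarith
        _ = Kb r (m+1) M ρ := by rw [Kb]

theorem summable_maj {α ρ : ℝ} (hρ0 : 0 ≤ ρ) (hρ1 : ρ < 1) :
    Summable (fun k : ℕ => ((k:ℝ)+1)^(α-1) * ρ^k) := by
  rcases eq_or_lt_of_le hρ0 with h0 | hpos
  · apply summable_of_ne_finset_zero (s := {0})
    intro k hk
    simp only [Finset.mem_singleton] at hk
    rw [← h0, zero_pow hk, mul_zero]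
  · set m : ℕ := ⌈α⌉₊ with hm
    have hsum : Summable (fun k : ℕ => ((k:ℝ))^m * ρ^k) := by
      apply summable_pow_mul_geometric_of_norm_lt_one
      rw [Real.norm_eq_abs, _root_.abs_of_nonneg hρ0]; exact hρ1
    have hsum2 : Summable (fun k : ℕ => (((k+1):ℝ))^m * ρ^(k+1)) := by
      exact_mod_cast (summable_nat_add_iff 1).mpr hsum
    have hsum3 : Summable (fun k : ℕ => (((k:ℝ)+1))^m * ρ^k) := by
      have := hsum2.div_const ρ
      apply this.congr
      intro k
      rw [pow_succ]
      field_simp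
    apply Summable.of_nonneg_of_le _ _ hsum3
    · intro k; positivity
    · intro k
      apply mul_le_mul_of_nonneg_right _ (by positivity)
      calc ((k:ℝ)+1)^(α-1) ≤ ((k:ℝ)+1)^(m:ℝ) := by
            apply Real.rpow_le_rpow_of_exponent_le (by linarith [Nat.cast_nonneg (α := ℝ) k])
            calc α - 1 ≤ α := by linarith
              _ ≤ m := Nat.le_ceil α
        _ = ((k:ℝ)+1)^m := by rw [Real.rpow_natCast]

theorem sup_bound {f : ℂ → ℂ} {α ρ : ℝ} (hf : HolOn f)
    (hc : ∀ k : ℕ, ‖coef f k‖ ≤ ((k:ℝ)+1)^(α-1)) (hρ0 : 0 ≤ ρ) (hρ1 : ρ < 1) :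
    ∀ z ∈ closedBall (0:ℂ) ρ, ‖f z‖ ≤ ∑' k : ℕ, ((k:ℝ)+1)^(α-1) * ρ^k := by
  intro z hz
  rw [mem_closedBall, dist_zero_right] at hz
  have hzb : z ∈ ball (0:ℂ) 1 := by rw [mem_ball, dist_zero_right]; linarith
  have hs := hasSum_coef hf hzb
  have hmaj : ∀ k : ℕ, ‖coef f k * z^k‖ ≤ ((k:ℝ)+1)^(α-1) * ρ^k := by
    intro k
    rw [norm_mul, norm_pow]
    apply mul_le_mul (hc k) (pow_le_pow_left₀ (norm_nonneg z) hz k) (by positivity)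
    · positivity
  have hsummaj := summable_maj hρ0 hρ1 (α := α)
  have hsn : Summable (fun k => ‖coef f k * z^k‖) :=
    Summable.of_nonneg_of_le (fun k => norm_nonneg _) hmaj hsummaj
  rw [← hs.tsum_eq]
  calc ‖∑' k, coef f k * z^k‖ ≤ ∑' k, ‖coef f k * z^k‖ := norm_tsum_le_tsum_norm hsn
    _ ≤ ∑' k : ℕ, ((k:ℝ)+1)^(α-1) * ρ^k := Summable.tsum_le_tsum hmaj hsn hsummaj


theorem hinf_norm_ge {g : ℂ → ℂ} (hg : MemHinf g) {z : ℂ} (hz : z ∈ ball (0:ℂ) 1) :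
    ‖g z‖ ≤ Hinfnorm g := le_csSup hg.2 ⟨z, hz, rfl⟩

theorem hinf_nonneg {g : ℂ → ℂ} (hg : MemHinf g) : 0 ≤ Hinfnorm g :=
  le_trans (norm_nonneg _) (hinf_norm_ge hg (mem_ball_self one_pos))

theorem core_lower {α r : ℝ} {n : ℕ} (hα : 1 ≤ α) (hr0 : 0 ≤ r) (hr1 : r < 1) (hn : 1 ≤ n)
    (Mem : (ℂ → ℂ) → Prop) (Nrm : (ℂ → ℂ) → ℝ)
    (H1 : ∀ f, Mem f → Nrm f ≤ 1 → HolOn f ∧ ∀ k : ℕ, ‖coef f k‖ ≤ ((k:ℝ)+1)^(α-1))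
    (f₀ : ℂ → ℂ) (hf₀m : Mem f₀) (hf₀n : Nrm f₀ ≤ 1) (hf₀h : MemHinf f₀)
    {T : ℝ} (hT : T ≤ ‖f₀ ((r:ℂ))‖) :
    T ≤ sSup { c | ∃ m, m ≤ n ∧ ∃ l : Fin m → ℂ, (∀ i, ‖l i‖ ≤ r) ∧
      c = sSup { c' | ∃ f, Mem f ∧ Nrm f ≤ 1 ∧
        c' = sInf { y | ∃ g, MemHinf g ∧ Hinfnorm g = y ∧ AgreeOn l f g } } } := by
  set ρ : ℝ := (1 + r)/2 with hρ
  have hrρ : r < ρ := by rw [hρ]; linarith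
  have hρ1 : ρ < 1 := by rw [hρ]; linarith
  have hρ0 : 0 ≤ ρ := by linarith
  set M₀ : ℝ := ∑' k : ℕ, ((k:ℝ)+1)^(α-1) * ρ^k with hM₀
  have hM₀0 : 0 ≤ M₀ := tsum_nonneg (fun k => by positivity)
  set Mtot : ℝ := ∑ j ∈ Finset.range (n+1), Kb r j M₀ ρ with hMtot
  have hKb0 : ∀ j, 0 ≤ Kb r j M₀ ρ := fun j => Kb_nonneg r j M₀ ρ hM₀0 hrρ
  have hMtot0 : 0 ≤ Mtot := Finset.sum_nonneg (fun j _ => hKb0 j)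
  have hKbMtot : ∀ m, m ≤ n → Kb r m M₀ ρ ≤ Mtot :=
    fun m hm => Finset.single_le_sum (fun j _ => hKb0 j)
      (Finset.mem_range.mpr (Nat.lt_succ_of_le hm))
  -- key: for any admissible l and f, there is a bounded interpolant
  have KEY : ∀ (m : ℕ), m ≤ n → ∀ (l : Fin m → ℂ), (∀ i, ‖l i‖ ≤ r) →
      ∀ f, Mem f → Nrm f ≤ 1 →
      ∃ g, MemHinf g ∧ AgreeOn l f g ∧ Hinfnorm g ≤ Mtot := by
    intro m hm l hl f hfm hfn
    obtain ⟨hfh, hfc⟩ := H1 f hfm hfn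
    have hbd := sup_bound hfh hfc hρ0 hρ1
    obtain ⟨g, h, hga, hha, hfac, hgbd⟩ :=
      interp_exists hr0 m l f ρ M₀ hfh.nhd hl hrρ hρ1 hbd
    have hgball : ∀ z ∈ ball (0:ℂ) 1, ‖g z‖ ≤ Kb r m M₀ ρ := by
      intro z hz
      apply hgbd
      exact ball_subset_closedBall hz
    have hgmem : MemHinf g := by
      refine ⟨hga.analyticOn, ⟨Kb r m M₀ ρ, ?_⟩⟩
      rintro y ⟨z, hz, rfl⟩
      exact hgball z hz
    refine ⟨g, hgmem, ?_, ?_⟩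
    · -- AgreeOn
      refine ⟨fun z => (∏ i, (-(1 - conj (l i) * z))) * h z, ?_, ?_⟩
      · apply AnalyticOnNhd.analyticOn
        intro z hz
        apply AnalyticAt.mul _ (hha z hz)
        apply Finset.analyticAt_fun_prod
        intro i _
        apply AnalyticAt.neg
        exact analyticAt_const.sub (analyticAt_const.mul analyticAt_id)
      · intro z hz
        rw [hfac z, BlaschkeProd]
        rw [mem_ball, dist_zero_right] at hz
        have hprod : ∀ i : Fin m, z - l i = blaschke (l i) z * (-(1 - conj (l i) * z)) := by
          intro i
          have hne : 1 - conj (l i) * z ≠ 0 := by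
            intro hcon
            have h1 : conj (l i) * z = 1 := (sub_eq_zero.mp hcon).symm
            have h2 : ‖conj (l i) * z‖ < 1 := by
              rw [norm_mul, RCLike.norm_conj]
              calc ‖l i‖ * ‖z‖ ≤ r * ‖z‖ := by
                    apply mul_le_mul_of_nonneg_right (hl i) (norm_nonneg z)
                _ ≤ 1 * ‖z‖ := by
                    apply mul_le_mul_of_nonneg_right (le_of_lt hr1) (norm_nonneg z)
                _ < 1 := by rw [one_mul]; exact hz
            rw [h1] at h2; simp at h2
          rw [blaschke]
          rw [div_mul_eq_mul_div, eq_div_iff hne]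
          ring
        calc (∏ i, (z - l i)) * h z
            = (∏ i, blaschke (l i) z * (-(1 - conj (l i) * z))) * h z := by
              congr 1; exact Finset.prod_congr rfl (fun i _ => hprod i)
          _ = (∏ i, blaschke (l i) z) * ((∏ i, (-(1 - conj (l i) * z))) * h z) := by
              rw [Finset.prod_mul_distrib]; ring
    · apply Real.sSup_le _ (le_trans (hKb0 m) (hKbMtot m hm))
      rintro y ⟨z, hz, rfl⟩
      exact le_trans (hgball z hz) (hKbMtot m hm)
  -- every inner sInf is ≤ Mtot, every inner sSup ≤ Mtot
  have hinner : ∀ (m : ℕ), m ≤ n → ∀ (l : Fin m → ℂ), (∀ i, ‖l i‖ ≤ r) →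
      sSup { c' | ∃ f, Mem f ∧ Nrm f ≤ 1 ∧
        c' = sInf { y | ∃ g, MemHinf g ∧ Hinfnorm g = y ∧ AgreeOn l f g } } ≤ Mtot := by
    intro m hm l hl
    apply Real.sSup_le _ hMtot0
    rintro c' ⟨f, hfm, hfn, rfl⟩
    obtain ⟨g, hg1, hg2, hg3⟩ := KEY m hm l hl f hfm hfn
    have hbb : BddBelow { y | ∃ g, MemHinf g ∧ Hinfnorm g = y ∧ AgreeOn l f g } := by
      refine ⟨0, ?_⟩
      rintro y ⟨g', hg', rfl, _⟩
      exact hinf_nonneg hg'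
    exact le_trans (csInf_le hbb ⟨g, hg1, rfl, hg2⟩) hg3
  -- the chosen node
  set l₀ : Fin 1 → ℂ := fun _ => (r:ℂ) with hl₀
  have hl₀r : ∀ i : Fin 1, ‖l₀ i‖ ≤ r := by
    intro i; rw [hl₀]; simp [Complex.norm_real, _root_.abs_of_nonneg hr0]
  have hrball : (r:ℂ) ∈ ball (0:ℂ) 1 := by
    rw [mem_ball, dist_zero_right, Complex.norm_real, Real.norm_eq_abs, _root_.abs_of_nonneg hr0]
    exact hr1
  -- lower bound for the inner sInf at f₀
  have hlow : T ≤ sInf { y | ∃ g, MemHinf g ∧ Hinfnorm g = y ∧ AgreeOn l₀ f₀ g } := by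
    apply le_csInf
    · refine ⟨Hinfnorm f₀, f₀, hf₀h, rfl, ⟨0, ?_, ?_⟩⟩
      · intro z hz; exact analyticAt_const.analyticWithinAt
      · intro z hz; simp
    · rintro y ⟨g, hg, rfl, ⟨h, hh, hagree⟩⟩
      have heq : g (r:ℂ) = f₀ (r:ℂ) := by
        have := hagree (r:ℂ) hrball
        have hB : BlaschkeProd l₀ (r:ℂ) = 0 := by
          rw [BlaschkeProd]
          rw [Fin.prod_univ_one]
          rw [hl₀]
          simp [blaschke]
        rw [hB, zero_mul] at this
        exact (sub_eq_zero.mp this).symm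
      calc T ≤ ‖f₀ (r:ℂ)‖ := hT
        _ = ‖g (r:ℂ)‖ := by rw [heq]
        _ ≤ Hinfnorm g := hinf_norm_ge hg hrball
  -- assemble
  have houter : T ≤ sSup { c' | ∃ f, Mem f ∧ Nrm f ≤ 1 ∧
      c' = sInf { y | ∃ g, MemHinf g ∧ Hinfnorm g = y ∧ AgreeOn l₀ f g } } := by
    apply le_trans hlow
    apply le_csSup
    · refine ⟨Mtot, ?_⟩
      rintro c' ⟨f, hfm, hfn, rfl⟩
      obtain ⟨g, hg1, hg2, hg3⟩ := KEY 1 hn l₀ hl₀r f hfm hfn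
      have hbb : BddBelow { y | ∃ g, MemHinf g ∧ Hinfnorm g = y ∧ AgreeOn l₀ f g } := by
        refine ⟨0, ?_⟩
        rintro y ⟨g', hg', rfl, _⟩
        exact hinf_nonneg hg'
      exact le_trans (csInf_le hbb ⟨g, hg1, rfl, hg2⟩) hg3
    · exact ⟨f₀, hf₀m, hf₀n, rfl⟩
  apply le_trans houter
  apply le_csSup
  · refine ⟨Mtot, ?_⟩
    rintro c ⟨m, hm, l, hl, rfl⟩
    exact hinner m hm l hl
  · exact ⟨1, hn, l₀, hl₀r, rfl⟩

def polyF (c : ℕ → ℝ) (N : ℕ) : ℂ → ℂ := fun z => ∑ k ∈ Finset.range N, (c k : ℂ) * z ^ k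

theorem polyF_eval (c : ℕ → ℝ) (N : ℕ) (z : ℂ) :
    polyF c N z = Polynomial.eval z (∑ k ∈ Finset.range N, Polynomial.monomial k ((c k : ℂ))) := by
  rw [polyF, Polynomial.eval_finset_sum]
  congr 1; ext k
  rw [Polynomial.eval_monomial]

theorem iteratedDeriv_polyeval (p : Polynomial ℂ) (k : ℕ) :
    iteratedDeriv k (fun z => Polynomial.eval z p) = fun z => Polynomial.eval z (Polynomial.derivative^[k] p) := by
  induction k with
  | zero => simp
  | succ k ih =>
    rw [iteratedDeriv_succ, ih, Function.iterate_succ_apply']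
    funext z
    exact Polynomial.deriv (p := Polynomial.derivative^[k] p)

theorem coef_polyF (c : ℕ → ℝ) (N : ℕ) (k : ℕ) :
    coef (polyF c N) k = if k < N then (c k : ℂ) else 0 := by
  have hfun : polyF c N = fun z => Polynomial.eval z (∑ j ∈ Finset.range N, Polynomial.monomial j ((c j : ℂ))) := by
    funext z; exact polyF_eval c N z
  rw [coef, hfun, iteratedDeriv_polyeval]
  beta_reduce
  set p : Polynomial ℂ := ∑ j ∈ Finset.range N, Polynomial.monomial j ((c j : ℂ)) with hp
  have h0 : Polynomial.eval 0 (Polynomial.derivative^[k] p) = (Polynomial.derivative^[k] p).coeff 0 :=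
    (Polynomial.coeff_zero_eq_eval_zero _).symm
  rw [h0, Polynomial.coeff_iterate_derivative]
  have hco : p.coeff k = if k < N then (c k : ℂ) else 0 := by
    rw [hp, Polynomial.finset_sum_coeff]
    simp only [Polynomial.coeff_monomial]
    rw [Finset.sum_ite_eq' (Finset.range N) k]
    simp [Finset.mem_range]
  rw [Nat.zero_add, Nat.descFactorial_self, hco, nsmul_eq_mul]
  have hfac : ((k.factorial : ℂ)) ≠ 0 := by exact_mod_cast k.factorial_ne_zero
  split
  · field_simp
  · simp

theorem polyF_hol (c : ℕ → ℝ) (N : ℕ) : HolOn (polyF c N) := by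
  have hd : Differentiable ℂ (polyF c N) := by
    apply Differentiable.fun_sum
    intro k _
    exact (differentiable_pow k).const_mul _
  exact ((hd.differentiableOn).analyticOnNhd isOpen_ball).analyticOn

theorem polyF_memHinf (c : ℕ → ℝ) (N : ℕ) : MemHinf (polyF c N) := by
  refine ⟨polyF_hol c N, ⟨∑ k ∈ Finset.range N, |c k|, ?_⟩⟩
  rintro y ⟨z, hz, rfl⟩
  rw [mem_ball, dist_zero_right] at hz
  calc ‖polyF c N z‖ ≤ ∑ k ∈ Finset.range N, ‖(c k : ℂ) * z ^ k‖ := norm_sum_le _ _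
    _ ≤ ∑ k ∈ Finset.range N, |c k| := by
        apply Finset.sum_le_sum
        intro k _
        rw [norm_mul, norm_pow, Complex.norm_real, Real.norm_eq_abs]
        calc |c k| * ‖z‖ ^ k ≤ |c k| * 1 := by
              apply mul_le_mul_of_nonneg_left _ (abs_nonneg _)
              exact pow_le_one₀ (norm_nonneg z) hz.le
          _ = |c k| := mul_one _

theorem polyF_real (c : ℕ → ℝ) (N : ℕ) (r : ℝ) :
    polyF c N (r : ℂ) = ((∑ k ∈ Finset.range N, c k * r ^ k : ℝ) : ℂ) := by
  rw [polyF]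
  push_cast
  rfl

theorem geom_term_lb {r : ℝ} (hr0 : 0 ≤ r) (hr1 : r < 1) {k : ℕ}
    (hk : k < ⌊1/(1-r)⌋₊) : (4:ℝ)⁻¹ ≤ r ^ k := by
  rcases Nat.eq_zero_or_pos k with rfl | hkpos
  · norm_num
  · set N := ⌊1/(1-r)⌋₊ with hN
    have h1r : 0 < 1 - r := by linarith
    have hx1 : (N:ℝ) ≤ 1/(1-r) := Nat.floor_le (by positivity)
    have hN2 : 2 ≤ N := by omega
    have hx2 : (2:ℝ) ≤ 1/(1-r) := le_trans (by exact_mod_cast hN2) hx1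
    have hrhalf : (1:ℝ)/2 ≤ r := by
      rw [le_div_iff₀ h1r] at hx2
      nlinarith
    have hrpos : 0 < r := by linarith
    have hkle : (k:ℝ) * (1 - r) ≤ r := by
      have hkN : (k:ℝ) ≤ (N:ℝ) - 1 := by
        have : k + 1 ≤ N := hk
        have := (Nat.cast_le (α := ℝ)).mpr this
        push_cast at this
        linarith
      have : (k:ℝ) ≤ 1/(1-r) - 1 := by linarith
      calc (k:ℝ) * (1-r) ≤ (1/(1-r) - 1) * (1-r) := by
            apply mul_le_mul_of_nonneg_right this h1r.le
        _ = 1 - (1-r) := by field_simp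
        _ = r := by ring
    have hinv : (r⁻¹) ^ k ≤ 4 := by
      have e1 : r⁻¹ = 1 + (1-r)/r := by field_simp; ring
      have e2 : (1 + (1-r)/r) ^ k ≤ Real.exp ((1-r)/r) ^ k := by
        apply pow_le_pow_left₀ (by positivity)
        linarith [Real.add_one_le_exp ((1-r)/r)]
      have e3 : Real.exp ((1-r)/r) ^ k = Real.exp (k * ((1-r)/r)) := by
        rw [← Real.exp_nat_mul]
      have e4 : (k:ℝ) * ((1-r)/r) ≤ 1 := by
        rw [mul_div_assoc', div_le_one hrpos]
        exact hkle
      calc r⁻¹ ^ k = (1 + (1-r)/r)^k := by rw [e1]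
        _ ≤ Real.exp ((k:ℝ) * ((1-r)/r)) := by rw [← e3]; exact e2
        _ ≤ Real.exp 1 := Real.exp_le_exp.mpr e4
        _ ≤ 4 := by linarith [Real.exp_one_lt_d9.le]
    have hrk : 0 < r ^ k := pow_pos hrpos k
    have hinv2 : (r ^ k)⁻¹ ≤ 4 := by
      rw [← inv_pow]
      exact hinv
    have h44 := inv_anti₀ (inv_pos.mpr hrk) hinv2
    rwa [inv_inv] at h44

theorem floor_facts {r : ℝ} (hr0 : 0 ≤ r) (hr1 : r < 1) :
    1 ≤ ⌊1/(1-r)⌋₊ ∧ (1/(1-r))/2 ≤ (⌊1/(1-r)⌋₊ : ℝ) := by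
  have h1r : 0 < 1 - r := by linarith
  have hx1 : (1:ℝ) ≤ 1/(1-r) := by
    rw [le_div_iff₀ h1r]; linarith
  have hfl1 : 1 ≤ ⌊1/(1-r)⌋₊ := by
    apply Nat.le_floor; exact_mod_cast hx1
  refine ⟨hfl1, ?_⟩
  rcases le_or_gt (1/(1-r)) 2 with h | h
  · calc (1/(1-r))/2 ≤ 2/2 := by linarith
      _ = 1 := by norm_num
      _ ≤ (⌊1/(1-r)⌋₊ : ℝ) := by exact_mod_cast hfl1
  · have := Nat.lt_floor_add_one (1/(1-r))
    linarith
theorem sum_lb {α r : ℝ} (hα : 1 ≤ α) (hr0 : 0 ≤ r) (hr1 : r < 1) :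
    ((⌊1/(1-r)⌋₊ : ℝ)/2) ^ α * (4:ℝ)⁻¹ ≤
      ∑ k ∈ Finset.range (⌊1/(1-r)⌋₊), ((k:ℝ)+1)^(α-1) * r^k := by
  set N := ⌊1/(1-r)⌋₊ with hN
  obtain ⟨hN1, hNx⟩ := floor_facts hr0 hr1
  have hNpos : (0:ℝ) < (N:ℝ)/2 := by
    have : (1:ℝ) ≤ (N:ℝ) := by exact_mod_cast hN1
    linarith
  have hterm : ∀ k ∈ Finset.Ico (N/2) N, ((N:ℝ)/2)^(α-1) * (4:ℝ)⁻¹ ≤ ((k:ℝ)+1)^(α-1) * r^k := by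
    intro k hk
    rw [Finset.mem_Ico] at hk
    have h1 : ((N:ℝ)/2) ≤ (k:ℝ)+1 := by
      have hmod := Nat.div_add_mod N 2
      have hmlt : N % 2 < 2 := Nat.mod_lt _ (by norm_num)
      have h2 : (N:ℝ) ≤ 2*((N/2 : ℕ):ℝ) + 2 := by
        have : N ≤ 2*(N/2) + 2 := by omega
        exact_mod_cast this
      have h3 : ((N/2:ℕ):ℝ) ≤ (k:ℝ) := by exact_mod_cast hk.1
      linarith
    apply mul_le_mul
    · exact Real.rpow_le_rpow hNpos.le h1 (by linarith)
    · exact geom_term_lb hr0 hr1 hk.2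
    · norm_num
    · positivity
  have hsub : Finset.Ico (N/2) N ⊆ Finset.range N := by
    intro k hk
    rw [Finset.mem_Ico] at hk
    exact Finset.mem_range.mpr hk.2
  have hcard : ((Finset.Ico (N/2) N).card : ℝ) = (N:ℝ) - ((N/2:ℕ):ℝ) := by
    rw [Nat.card_Ico, Nat.cast_sub (Nat.div_le_self N 2)]
  have hcard2 : (N:ℝ)/2 ≤ ((Finset.Ico (N/2) N).card : ℝ) := by
    rw [hcard]
    have := Nat.cast_div_le (m := N) (n := 2) (α := ℝ)
    push_cast at this
    linarith
  calc ((N:ℝ)/2)^α * (4:ℝ)⁻¹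
      = ((N:ℝ)/2) * (((N:ℝ)/2)^(α-1) * (4:ℝ)⁻¹) := by
        have e := Real.rpow_add hNpos (α-1) 1
        rw [Real.rpow_one] at e
        have e2 : (α-1)+1 = α := by ring
        rw [e2] at e
        rw [e]
        ring
    _ ≤ ((Finset.Ico (N/2) N).card : ℝ) * (((N:ℝ)/2)^(α-1) * (4:ℝ)⁻¹) := by
        apply mul_le_mul_of_nonneg_right hcard2
        positivity
    _ ≤ ∑ k ∈ Finset.Ico (N/2) N, ((k:ℝ)+1)^(α-1) * r^k := by
        have := Finset.card_nsmul_le_sum (Finset.Ico (N/2) N)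
          (fun k => ((k:ℝ)+1)^(α-1) * r^k) (((N:ℝ)/2)^(α-1) * (4:ℝ)⁻¹) hterm
        rwa [nsmul_eq_mul] at this
    _ ≤ ∑ k ∈ Finset.range N, ((k:ℝ)+1)^(α-1) * r^k := by
        apply Finset.sum_le_sum_of_subset_of_nonneg hsub
        intro k _ _
        positivity

def cconst (α : ℝ) : ℝ := ((2:ℝ)^α * (2:ℝ)^α * 4)⁻¹

theorem cconst_pos (α : ℝ) : 0 < cconst α := by
  rw [cconst]
  have h1 : (0:ℝ) < (2:ℝ)^α := Real.rpow_pos_of_pos (by norm_num) α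
  positivity

/-- Lower bound on the witness value: common part. -/
theorem witness_value {α r A e : ℝ} (hα : 1 ≤ α) (hr0 : 0 ≤ r) (hr1 : r < 1)
    (hA : A = ((⌊1/(1-r)⌋₊ : ℝ)) ^ (e - α)) (he0 : 0 ≤ e) (heα : e ≤ α) :
    cconst α * (1/(1-r)) ^ e ≤
      A * ∑ k ∈ Finset.range (⌊1/(1-r)⌋₊), ((k:ℝ)+1)^(α-1) * r^k := by
  set N := ⌊1/(1-r)⌋₊ with hN
  obtain ⟨hN1, hNx⟩ := floor_facts hr0 hr1
  have hNpos : (0:ℝ) < (N:ℝ) := by exact_mod_cast Nat.lt_of_lt_of_le Nat.zero_lt_one hN1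
  have hx0 : (0:ℝ) < 1/(1-r) := by
    have : (0:ℝ) < 1 - r := by linarith
    positivity
  have hA0 : 0 ≤ A := by rw [hA]; positivity
  have h2α : (0:ℝ) < (2:ℝ)^α := Real.rpow_pos_of_pos (by norm_num) α
  have h2e : (0:ℝ) < (2:ℝ)^e := Real.rpow_pos_of_pos (by norm_num) e
  have hS := sum_lb hα hr0 hr1
  have step1 : A * (((N:ℝ)/2)^α * (4:ℝ)⁻¹) ≤
      A * ∑ k ∈ Finset.range N, ((k:ℝ)+1)^(α-1) * r^k :=
    mul_le_mul_of_nonneg_left hS hA0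
  refine le_trans ?_ step1
  -- A * ((N/2)^α * 4⁻¹) = N^e * (2^α)⁻¹ * 4⁻¹
  have e1 : ((N:ℝ)/2)^α = (N:ℝ)^α / (2:ℝ)^α := Real.div_rpow hNpos.le (by norm_num) α
  have e2 : A * (N:ℝ)^α = (N:ℝ)^e := by
    rw [hA, ← Real.rpow_add hNpos]
    congr 1; ring
  have e3 : A * (((N:ℝ)/2)^α * (4:ℝ)⁻¹) = (N:ℝ)^e * ((2:ℝ)^α)⁻¹ * (4:ℝ)⁻¹ := by
    rw [e1, ← e2]; field_simp
    try ring
  rw [e3]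
  -- N^e ≥ (x/2)^e = x^e * (2^e)⁻¹ ≥ x^e * (2^α)⁻¹
  have h4 : (1/(1-r))^e * ((2:ℝ)^α)⁻¹ ≤ (N:ℝ)^e := by
    have h5 : ((1/(1-r))/2)^e ≤ (N:ℝ)^e := Real.rpow_le_rpow (by positivity) hNx he0
    have h6 : ((1/(1-r))/2)^e = (1/(1-r))^e / (2:ℝ)^e := Real.div_rpow hx0.le (by norm_num) e
    have h7 : ((2:ℝ)^α)⁻¹ ≤ ((2:ℝ)^e)⁻¹ := by
      apply inv_anti₀ h2e
      exact Real.rpow_le_rpow_of_exponent_le (by norm_num) heα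
    calc (1/(1-r))^e * ((2:ℝ)^α)⁻¹ ≤ (1/(1-r))^e * ((2:ℝ)^e)⁻¹ := by
          apply mul_le_mul_of_nonneg_left h7 (by positivity)
      _ = (1/(1-r))^e / (2:ℝ)^e := (div_eq_mul_inv _ _).symm
      _ = ((1/(1-r))/2)^e := h6.symm
      _ ≤ (N:ℝ)^e := h5
  calc cconst α * (1/(1-r))^e
      = ((1/(1-r))^e * ((2:ℝ)^α)⁻¹) * ((2:ℝ)^α)⁻¹ * (4:ℝ)⁻¹ := by
        rw [cconst]; field_simp
        try ring
    _ ≤ (N:ℝ)^e * ((2:ℝ)^α)⁻¹ * (4:ℝ)⁻¹ := by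
        apply mul_le_mul_of_nonneg_right _ (by norm_num)
        apply mul_le_mul_of_nonneg_right h4 (by positivity)

theorem branch_p {α p : ℝ} (hα : 1 ≤ α) (hp : 1 ≤ p) {n : ℕ} (hn : 1 ≤ n) {r : ℝ}
    (hr0 : 0 ≤ r) (hr1 : r < 1) :
    cconst α * (1 / (1 - r)) ^ (α - 1 / p) ≤ CnrLpaHinf p α n r := by
  have hp0 : (0:ℝ) < p := lt_of_lt_of_le one_pos hp
  have hpne : p ≠ 0 := hp0.ne'
  have h1p0 : 0 ≤ 1/p := by positivity
  have h1p1 : 1/p ≤ 1 := by rw [div_le_one hp0]; exact hp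
  set N := ⌊1/(1-r)⌋₊ with hN
  obtain ⟨hN1, hNx⟩ := floor_facts hr0 hr1
  have hNpos : (0:ℝ) < (N:ℝ) := by exact_mod_cast Nat.lt_of_lt_of_le Nat.zero_lt_one hN1
  set A : ℝ := (N:ℝ) ^ (-(1/p)) with hA
  have hA0 : 0 ≤ A := by rw [hA]; positivity
  set cs : ℕ → ℝ := fun k => A * ((k:ℝ)+1)^(α-1) with hcs
  have hcs0 : ∀ k, 0 ≤ cs k := fun k => by rw [hcs]; positivity
  set f₀ := polyF cs N with hf₀
  have hnormcoef : ∀ k, ‖coef f₀ k‖ = if k < N then cs k else 0 := by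
    intro k
    rw [hf₀, coef_polyF]
    split
    · rw [Complex.norm_real, Real.norm_eq_abs, _root_.abs_of_nonneg (hcs0 k)]
    · simp
  have hden : ∀ k : ℕ, (0:ℝ) < ((k:ℝ)+1)^(p*(α-1)) :=
    fun k => Real.rpow_pos_of_pos (by positivity) _
  have hAp : A ^ p = (N:ℝ)⁻¹ := by
    rw [hA, ← Real.rpow_mul hNpos.le]
    rw [show (-(1/p))*p = -1 by field_simp]
    exact Real.rpow_neg_one _
  have ht : ∀ k : ℕ, ‖coef f₀ k‖ ^ p / ((k:ℝ)+1)^(p*(α-1)) = if k < N then A^p else 0 := by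
    intro k
    rw [hnormcoef k]
    split
    · rw [hcs]
      have hb0 : (0:ℝ) ≤ ((k:ℝ)+1)^(α-1) := by positivity
      rw [Real.mul_rpow hA0 hb0]
      rw [← Real.rpow_mul (by positivity : (0:ℝ) ≤ (k:ℝ)+1)]
      rw [mul_comm (α-1) p]
      rw [mul_div_assoc, div_self (hden k).ne', mul_one]
    · rw [Real.zero_rpow hpne, zero_div]
  have hsummable : Summable (fun k : ℕ => ‖coef f₀ k‖ ^ p / ((k:ℝ)+1)^(p*(α-1))) := by
    apply summable_of_ne_finset_zero (s := Finset.range N)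
    intro k hk
    rw [ht k, if_neg (fun h => hk (Finset.mem_range.mpr h))]
  have htsum : (∑' k : ℕ, ‖coef f₀ k‖ ^ p / ((k:ℝ)+1)^(p*(α-1))) = 1 := by
    rw [tsum_eq_sum (s := Finset.range N)
      (fun k hk => by rw [ht k, if_neg (fun h => hk (Finset.mem_range.mpr h))])]
    rw [Finset.sum_congr rfl (fun k hk => by rw [ht k, if_pos (Finset.mem_range.mp hk)])]
    rw [Finset.sum_const, Finset.card_range, nsmul_eq_mul, hAp]
    exact mul_inv_cancel₀ hNpos.ne'
  have hMem : MemLpa p α f₀ := ⟨polyF_hol cs N, hsummable⟩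
  have hNrm : lpaNorm p α f₀ ≤ 1 := by
    rw [lpaNorm, htsum, Real.one_rpow]
  have hval : cconst α * (1 / (1 - r)) ^ (α - 1/p) ≤ ‖f₀ ((r:ℂ))‖ := by
    rw [hf₀, polyF_real, Complex.norm_real, Real.norm_eq_abs]
    have hsum0 : 0 ≤ ∑ k ∈ Finset.range N, cs k * r ^ k :=
      Finset.sum_nonneg (fun k _ => mul_nonneg (hcs0 k) (pow_nonneg hr0 k))
    rw [_root_.abs_of_nonneg hsum0]
    have heq : ∑ k ∈ Finset.range N, cs k * r ^ k
        = A * ∑ k ∈ Finset.range N, ((k:ℝ)+1)^(α-1) * r^k := by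
      rw [Finset.mul_sum]
      apply Finset.sum_congr rfl
      intro k _
      rw [hcs]; ring
    rw [heq]
    apply witness_value hα hr0 hr1 _ (by linarith) (by linarith)
    rw [hA]; congr 1; ring
  -- H1
  have H1 : ∀ f, MemLpa p α f → lpaNorm p α f ≤ 1 →
      HolOn f ∧ ∀ k : ℕ, ‖coef f k‖ ≤ ((k:ℝ)+1)^(α-1) := by
    intro f hf hnf
    refine ⟨hf.1, ?_⟩
    intro k
    set t : ℕ → ℝ := fun k => ‖coef f k‖ ^ p / ((k:ℝ)+1)^(p*(α-1)) with htdef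
    have ht0 : ∀ j, 0 ≤ t j := fun j => by
      apply div_nonneg (Real.rpow_nonneg (norm_nonneg _) p) (hden j).le
    have hS0 : 0 ≤ ∑' j, t j := tsum_nonneg ht0
    have hS1 : (∑' j, t j) ≤ 1 := by
      have h1 : ((∑' j, t j) ^ (1/p)) ^ p ≤ 1 := by
        have := hnf
        rw [lpaNorm] at this
        calc ((∑' j, t j) ^ (1/p)) ^ p ≤ 1 ^ p :=
              Real.rpow_le_rpow (Real.rpow_nonneg hS0 _) this hp0.le
          _ = 1 := Real.one_rpow p
      rwa [← Real.rpow_mul hS0, one_div, inv_mul_cancel₀ hpne, Real.rpow_one] at h1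
    have htk : t k ≤ 1 := le_trans (Summable.le_tsum hf.2 k (fun j _ => ht0 j)) hS1
    have h2 : ‖coef f k‖ ^ p ≤ ((k:ℝ)+1)^(p*(α-1)) := by
      rw [htdef] at htk
      exact (div_le_one (hden k)).mp htk
    have h3 := Real.rpow_le_rpow (Real.rpow_nonneg (norm_nonneg _) p) h2 h1p0
    rwa [← Real.rpow_mul (norm_nonneg _), ← Real.rpow_mul (by positivity : (0:ℝ) ≤ (k:ℝ)+1),
      mul_one_div, div_self hpne, Real.rpow_one,
      show p*(α-1)*(1/p) = α - 1 by field_simp] at h3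
  rw [CnrLpaHinf]
  exact core_lower hα hr0 hr1 hn (MemLpa p α) (lpaNorm p α) H1 f₀ hMem hNrm
    (polyF_memHinf cs N) hval

theorem branch_inf {α : ℝ} (hα : 1 ≤ α) {n : ℕ} (hn : 1 ≤ n) {r : ℝ}
    (hr0 : 0 ≤ r) (hr1 : r < 1) :
    cconst α * (1 / (1 - r)) ^ α ≤ CnrLinfaHinf α n r := by
  set N := ⌊1/(1-r)⌋₊ with hN
  obtain ⟨hN1, hNx⟩ := floor_facts hr0 hr1
  have hNpos : (0:ℝ) < (N:ℝ) := by exact_mod_cast Nat.lt_of_lt_of_le Nat.zero_lt_one hN1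
  set cs : ℕ → ℝ := fun k => ((k:ℝ)+1)^(α-1) with hcs
  have hcs0 : ∀ k, 0 ≤ cs k := fun k => by rw [hcs]; positivity
  have hcspos : ∀ k : ℕ, (0:ℝ) < ((k:ℝ)+1)^(α-1) :=
    fun k => Real.rpow_pos_of_pos (by positivity) _
  set f₀ := polyF cs N with hf₀
  have hnormcoef : ∀ k, ‖coef f₀ k‖ = if k < N then cs k else 0 := by
    intro k
    rw [hf₀, coef_polyF]
    split
    · rw [Complex.norm_real, Real.norm_eq_abs, _root_.abs_of_nonneg (hcs0 k)]
    · simp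
  have hterm : ∀ k : ℕ, ‖coef f₀ k‖ / ((k:ℝ)+1)^(α-1) ≤ 1 := by
    intro k
    rw [hnormcoef k]
    split
    · rw [hcs, div_self (hcspos k).ne']
    · rw [zero_div]; norm_num
  have hMem : MemLinfa α f₀ := by
    refine ⟨polyF_hol cs N, ⟨1, ?_⟩⟩
    rintro y ⟨k, rfl⟩
    exact hterm k
  have hNrm : linfaNorm α f₀ ≤ 1 := by
    rw [linfaNorm]
    exact ciSup_le hterm
  have hval : cconst α * (1 / (1 - r)) ^ α ≤ ‖f₀ ((r:ℂ))‖ := by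
    rw [hf₀, polyF_real, Complex.norm_real, Real.norm_eq_abs]
    have hsum0 : 0 ≤ ∑ k ∈ Finset.range N, cs k * r ^ k :=
      Finset.sum_nonneg (fun k _ => mul_nonneg (hcs0 k) (pow_nonneg hr0 k))
    rw [_root_.abs_of_nonneg hsum0]
    have heq : ∑ k ∈ Finset.range N, cs k * r ^ k
        = 1 * ∑ k ∈ Finset.range N, ((k:ℝ)+1)^(α-1) * r^k := by
      rw [one_mul]
    rw [heq]
    apply witness_value hα hr0 hr1 _ (by linarith) (le_refl α)
    rw [sub_self, Real.rpow_zero]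
  have H1 : ∀ f, MemLinfa α f → linfaNorm α f ≤ 1 →
      HolOn f ∧ ∀ k : ℕ, ‖coef f k‖ ≤ ((k:ℝ)+1)^(α-1) := by
    intro f hf hnf
    refine ⟨hf.1, ?_⟩
    intro k
    have h1 : ‖coef f k‖ / ((k:ℝ)+1)^(α-1) ≤ 1 := by
      have h2 := le_ciSup hf.2 k
      rw [linfaNorm] at hnf
      exact le_trans h2 hnf
    have := (div_le_one (hcspos k)).mp h1
    exact this
  rw [CnrLinfaHinf]
  exact core_lower hα hr0 hr1 hn (MemLinfa α) (linfaNorm α) H1 f₀ hMem hNrm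
    (polyF_memHinf cs N) hval

/-- Théorème 3 (1), lower bound: for `X = l^p_a(α)`, `α ≥ 1`, `1 ≤ p ≤ ∞`,
`C_{n,r}(X, H^∞) ≥ c (1/(1-r))^{α - 1/p}` (case `p = ∞`, exponent `α`, stated
via the sup-norm space `l^∞_a(α)`). -/
theorem Cnr_lpa_Hinf_lower (α : ℝ) (hα : 1 ≤ α) :
    (∀ p : ℝ, 1 ≤ p →
      ∃ c : ℝ, 0 < c ∧ ∀ n : ℕ, 1 ≤ n → ∀ r : ℝ, 0 ≤ r → r < 1 →
        c * (1 / (1 - r)) ^ (α - 1 / p) ≤ CnrLpaHinf p α n r) ∧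
    (∃ c : ℝ, 0 < c ∧ ∀ n : ℕ, 1 ≤ n → ∀ r : ℝ, 0 ≤ r → r < 1 →
      c * (1 / (1 - r)) ^ α ≤ CnrLinfaHinf α n r) := by
  constructor
  · intro p hp
    exact ⟨cconst α, cconst_pos α, fun n hn r hr0 hr1 => branch_p hα hp hn hr0 hr1⟩
  · exact ⟨cconst α, cconst_pos α, fun n hn r hr0 hr1 => branch_inf hα hn hr0 hr1⟩
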